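/- Let μ, ν be probability measures on compact sets 𝒳, 𝒴 respectively, let c be a bounded measurable cost, and let ε > 0. Suppose (φ₀, ψ₀) ∈ L¹(μ) × L¹(ν) is a pair of dual potentials maximizing the dual EOT functional D(φ,ψ) = ∫φ dμ + ∫ψ dν - ε∫exp((φ(x)+ψ(y)-c(x,y))/ε) dμ⊗ν + ε. Define φ(x) = -ε log ∫ exp((ψ₀(y)-c(x,y))/ε) dν(y) and ψ = φ^{c,ε} (the (c,ε)-transform of φ with respect to μ). Then D(φ, ψ) ≥ D(φ₀, ψ₀), so (φ, ψ) is also a maximizing pair; moreover φ = φ₀ μ-a.s. and ψ = ψ₀ ν-a.s. -/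

import Mathlib

open MeasureTheory Filter

/-- The full EOT dual objective
`D(φ,ψ) = ∫φ dμ + ∫ψ dν - ε ∫ exp((φ⊕ψ-c)/ε) d(μ⊗ν) + ε`. -/
noncomputable def dualObj {α β : Type*} [MeasurableSpace α] [MeasurableSpace β]
    (μ : Measure α) (ν : Measure β) (c : α → β → ℝ) (ε : ℝ)
    (φ : α → ℝ) (ψ : β → ℝ) : ℝ :=
  ∫ x, φ x ∂μ + ∫ y, ψ y ∂ν
    - ε * ∫ p, Real.exp ((φ p.1 + ψ p.2 - c p.1 p.2) / ε) ∂(μ.prod ν) + ε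

section Aux

variable {α β : Type*} [MeasurableSpace α] [MeasurableSpace β]

lemma dualObj_swap (μ : Measure α) (ν : Measure β)
    [SFinite μ] [SFinite ν]
    (c : α → β → ℝ) (ε : ℝ) (φ' : α → ℝ) (ψ' : β → ℝ) :
    dualObj ν μ (fun y x => c x y) ε ψ' φ' = dualObj μ ν c ε φ' ψ' := by
  have h : ∫ p, Real.exp ((ψ' p.1 + φ' p.2 - c p.2 p.1) / ε) ∂(ν.prod μ)
      = ∫ p, Real.exp ((φ' p.1 + ψ' p.2 - c p.1 p.2) / ε) ∂(μ.prod ν) := by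
    rw [← integral_prod_swap (fun z : α × β => Real.exp ((φ' z.1 + ψ' z.2 - c z.1 z.2) / ε))]
    refine integral_congr_ae (Eventually.of_forall fun p => ?_)
    simp only [Prod.fst_swap, Prod.snd_swap]
    congr 1
    ring
  simp only [dualObj, h]
  ring

lemma half_step (μ : Measure α) (ν : Measure β)
    [IsProbabilityMeasure μ] [IsProbabilityMeasure ν]
    (c : α → β → ℝ) (hcm : Measurable fun p : α × β => c p.1 p.2)
    (Mc : ℝ) (hcb : ∀ x y, |c x y| ≤ Mc)
    (ε : ℝ) (hε : 0 < ε)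
    (φ₀ : α → ℝ) (ψ₀ : β → ℝ) (hφ₀ : Integrable φ₀ μ) (hψ₀ : Integrable ψ₀ ν)
    (hE₀ : Integrable (fun p : α × β => Real.exp ((φ₀ p.1 + ψ₀ p.2 - c p.1 p.2) / ε)) (μ.prod ν))
    (φ : α → ℝ)
    (hφdef : ∀ x, φ x = -ε * Real.log (∫ y, Real.exp ((ψ₀ y - c x y) / ε) ∂ν)) :
    Integrable φ μ ∧
    Integrable (fun p : α × β => Real.exp ((φ p.1 + ψ₀ p.2 - c p.1 p.2) / ε)) (μ.prod ν) ∧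
    dualObj μ ν c ε φ₀ ψ₀ ≤ dualObj μ ν c ε φ ψ₀ ∧
    (dualObj μ ν c ε φ ψ₀ ≤ dualObj μ ν c ε φ₀ ψ₀ → φ =ᵐ[μ] φ₀) := by
  have hε' : ε ≠ 0 := ne_of_gt hε
  have hmc : ∀ x, Measurable fun y => c x y := fun x => hcm.comp measurable_prodMk_left
  -- integrability of exp(ψ₀/ε)
  obtain ⟨x₀, hx₀⟩ := hE₀.prod_right_ae.exists
  have hBint : Integrable (fun y => Real.exp (ψ₀ y / ε)) ν := by
    have heq : (fun y => Real.exp (ψ₀ y / ε))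
        = fun y => Real.exp ((c x₀ y - φ₀ x₀) / ε)
            * Real.exp ((φ₀ x₀ + ψ₀ y - c x₀ y) / ε) := by
      funext y; rw [← Real.exp_add]; congr 1; field_simp; ring
    rw [heq]
    refine hx₀.bdd_mul
      (Real.continuous_exp.comp_aestronglyMeasurable
        (((hmc x₀).sub measurable_const).div_const ε).aestronglyMeasurable)
      (c := Real.exp ((Mc + |φ₀ x₀|) / ε)) (Eventually.of_forall fun y => ?_)
    rw [Real.norm_eq_abs, Real.abs_exp]
    apply Real.exp_le_exp.2
    apply (div_le_div_iff_of_pos_right hε).2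
    have h1 := (abs_le.1 (hcb x₀ y)).2
    have h2 := neg_abs_le (φ₀ x₀)
    linarith
  set B := ∫ y, Real.exp (ψ₀ y / ε) ∂ν with hBdef
  have hBpos : 0 < B := by
    rw [hBdef]
    rw [integral_pos_iff_support_of_nonneg (fun y => (Real.exp_pos _).le) hBint]
    have hs : Function.support (fun y => Real.exp (ψ₀ y / ε)) = Set.univ :=
      Set.eq_univ_of_forall fun y => (Real.exp_pos _).ne'
    rw [hs]
    simp
  -- slice integrability
  have hslice : ∀ x, Integrable (fun y => Real.exp ((ψ₀ y - c x y) / ε)) ν := by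
    intro x
    have heq : (fun y => Real.exp ((ψ₀ y - c x y) / ε))
        = fun y => Real.exp (-c x y / ε) * Real.exp (ψ₀ y / ε) := by
      funext y; rw [← Real.exp_add]; congr 1; ring
    rw [heq]
    refine hBint.bdd_mul
      (Real.continuous_exp.comp_aestronglyMeasurable
        (((hmc x).neg.div_const ε).aestronglyMeasurable))
      (c := Real.exp (Mc / ε)) (Eventually.of_forall fun y => ?_)
    rw [Real.norm_eq_abs, Real.abs_exp]
    apply Real.exp_le_exp.2
    exact (div_le_div_iff_of_pos_right hε).2 (neg_le.2 (abs_le.1 (hcb x y)).1)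
  set A : α → ℝ := fun x => ∫ y, Real.exp ((ψ₀ y - c x y) / ε) ∂ν with hAdef
  have hAlb : ∀ x, Real.exp (-Mc / ε) * B ≤ A x := by
    intro x
    rw [hBdef, ← integral_const_mul]
    refine integral_mono (hBint.const_mul _) (hslice x) fun y => ?_
    rw [← Real.exp_add]
    apply Real.exp_le_exp.2
    rw [← add_div]
    apply (div_le_div_iff_of_pos_right hε).2
    linarith [(abs_le.1 (hcb x y)).2]
  have hAub : ∀ x, A x ≤ Real.exp (Mc / ε) * B := by
    intro x
    rw [hBdef, ← integral_const_mul]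
    refine integral_mono (hslice x) (hBint.const_mul _) fun y => ?_
    rw [← Real.exp_add]
    apply Real.exp_le_exp.2
    rw [← add_div]
    apply (div_le_div_iff_of_pos_right hε).2
    linarith [(abs_le.1 (hcb x y)).1]
  have hApos : ∀ x, 0 < A x := fun x => lt_of_lt_of_le (by positivity) (hAlb x)
  -- bound on φ
  have hφbd : ∀ x, |φ x| ≤ Mc + ε * |Real.log B| := by
    intro x
    have h1 : Real.log (Real.exp (-Mc / ε) * B) ≤ Real.log (A x) :=
      Real.log_le_log (by positivity) (hAlb x)
    have h2 : Real.log (A x) ≤ Real.log (Real.exp (Mc / ε) * B) :=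
      Real.log_le_log (hApos x) (hAub x)
    rw [Real.log_mul (Real.exp_ne_zero _) hBpos.ne', Real.log_exp] at h1 h2
    rw [hφdef x,
      show (∫ (y : β), Real.exp ((ψ₀ y - c x y) / ε) ∂ν) = A x from rfl,
      abs_mul, abs_neg, abs_of_pos hε]
    have hmd : -Mc / ε = -(Mc / ε) := by ring
    have h3 : |Real.log (A x)| ≤ Mc / ε + |Real.log B| := by
      rw [abs_le]
      constructor
      · linarith [neg_abs_le (Real.log B)]
      · linarith [le_abs_self (Real.log B)]
    calc ε * |Real.log (A x)| ≤ ε * (Mc / ε + |Real.log B|) := by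
          exact mul_le_mul_of_nonneg_left h3 hε.le
      _ = Mc + ε * |Real.log B| := by field_simp
  -- measurability of φ
  obtain ⟨ψ₁, hψ₁m, hψ₁e⟩ := hψ₀.aestronglyMeasurable
  have hAmeas : StronglyMeasurable A := by
    have hAeq : A = fun x => ∫ y, Real.exp ((ψ₁ y - c x y) / ε) ∂ν := by
      funext x
      exact integral_congr_ae (hψ₁e.mono fun y hy => by dsimp only; rw [hy])
    rw [hAeq]
    exact (Real.measurable_exp.comp
      (((hψ₁m.measurable.comp measurable_snd).sub hcm).div_const
        ε)).stronglyMeasurable.integral_prod_right'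
  have hφmeas : Measurable φ := by
    rw [show φ = fun x => -ε * Real.log (A x) from funext hφdef]
    exact (Real.measurable_log.comp hAmeas.measurable).const_mul (-ε)
  have hφint : Integrable φ μ :=
    (integrable_const (Mc + ε * |Real.log B|)).mono' hφmeas.aestronglyMeasurable
      (Eventually.of_forall fun x => by simpa using hφbd x)
  -- key identity
  have hφA : ∀ x, Real.exp (φ x / ε) * A x = 1 := by
    intro x
    rw [show φ x / ε = -Real.log (A x) by
        rw [hφdef x, show (∫ (y : β), Real.exp ((ψ₀ y - c x y) / ε) ∂ν) = A x from rfl]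
        field_simp,
      Real.exp_neg, Real.exp_log (hApos x)]
    exact inv_mul_cancel₀ (hApos x).ne'
  have hAexp : ∀ x, A x = Real.exp (-(φ x / ε)) := by
    intro x
    rw [Real.exp_neg]
    exact eq_inv_of_mul_eq_one_left (mul_comm (Real.exp (φ x / ε)) (A x) ▸ hφA x)
  -- integrability on the product
  have hsnd : Integrable (fun p : α × β => Real.exp (ψ₀ p.2 / ε)) (μ.prod ν) := by
    have h := (integrable_const (1 : ℝ) : Integrable _ μ).mul_prod hBint
    simpa using h
  have hfint : Integrable (fun p : α × β => Real.exp ((ψ₀ p.2 - c p.1 p.2) / ε)) (μ.prod ν) := by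
    have heq : (fun p : α × β => Real.exp ((ψ₀ p.2 - c p.1 p.2) / ε))
        = fun p => Real.exp (-c p.1 p.2 / ε) * Real.exp (ψ₀ p.2 / ε) := by
      funext p; rw [← Real.exp_add]; congr 1; ring
    rw [heq]
    refine hsnd.bdd_mul
      (Real.continuous_exp.comp_aestronglyMeasurable
        ((hcm.neg.div_const ε).aestronglyMeasurable))
      (c := Real.exp (Mc / ε)) (Eventually.of_forall fun p => ?_)
    rw [Real.norm_eq_abs, Real.abs_exp]
    apply Real.exp_le_exp.2
    exact (div_le_div_iff_of_pos_right hε).2 (neg_le.2 (abs_le.1 (hcb p.1 p.2)).1)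
  have hGint : Integrable
      (fun p : α × β => Real.exp ((φ p.1 + ψ₀ p.2 - c p.1 p.2) / ε)) (μ.prod ν) := by
    have heq : (fun p : α × β => Real.exp ((φ p.1 + ψ₀ p.2 - c p.1 p.2) / ε))
        = fun p => Real.exp (φ p.1 / ε) * Real.exp ((ψ₀ p.2 - c p.1 p.2) / ε) := by
      funext p; rw [← Real.exp_add]; congr 1; ring
    rw [heq]
    refine hfint.bdd_mul
      (Real.continuous_exp.comp_aestronglyMeasurable
        (((hφmeas.comp measurable_fst).div_const ε).aestronglyMeasurable))
      (c := Real.exp ((Mc + ε * |Real.log B|) / ε)) (Eventually.of_forall fun p => ?_)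
    rw [Real.norm_eq_abs, Real.abs_exp]
    apply Real.exp_le_exp.2
    exact (div_le_div_iff_of_pos_right hε).2 (le_trans (le_abs_self _) (hφbd p.1))
  -- ∫ G = 1
  have hGone : ∫ p, Real.exp ((φ p.1 + ψ₀ p.2 - c p.1 p.2) / ε) ∂(μ.prod ν) = 1 := by
    rw [integral_prod _ hGint]
    have hone : ∀ x, (∫ y, Real.exp ((φ x + ψ₀ y - c x y) / ε) ∂ν) = 1 := by
      intro x
      have heq : (fun y => Real.exp ((φ x + ψ₀ y - c x y) / ε))
          = fun y => Real.exp (φ x / ε) * Real.exp ((ψ₀ y - c x y) / ε) := by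
        funext y; rw [← Real.exp_add]; congr 1; ring
      rw [heq, integral_const_mul]
      exact hφA x
    simp only [hone]
    simp
  -- Fubini for E₀
  have hinner : ∀ x, (∫ y, Real.exp ((φ₀ x + ψ₀ y - c x y) / ε) ∂ν)
      = Real.exp ((φ₀ x - φ x) / ε) := by
    intro x
    have heq : (fun y => Real.exp ((φ₀ x + ψ₀ y - c x y) / ε))
        = fun y => Real.exp (φ₀ x / ε) * Real.exp ((ψ₀ y - c x y) / ε) := by
      funext y; rw [← Real.exp_add]; congr 1; ring
    rw [heq, integral_const_mul,
      show (∫ y, Real.exp ((ψ₀ y - c x y) / ε) ∂ν) = A x from rfl,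
      hAexp x, ← Real.exp_add]
    congr 1
    ring
  have hE₀eq : ∫ p, Real.exp ((φ₀ p.1 + ψ₀ p.2 - c p.1 p.2) / ε) ∂(μ.prod ν)
      = ∫ x, Real.exp ((φ₀ x - φ x) / ε) ∂μ := by
    rw [integral_prod _ hE₀]
    exact integral_congr_ae (Eventually.of_forall fun x => hinner x)
  have hhint : Integrable (fun x => Real.exp ((φ₀ x - φ x) / ε)) μ :=
    hE₀.integral_prod_left.congr (Eventually.of_forall fun x => hinner x)
  -- the nonnegative discrepancy
  set F : α → ℝ := fun x => ε * Real.exp ((φ₀ x - φ x) / ε) - (φ₀ x - φ x) - ε with hFdef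
  have hFint : Integrable F μ :=
    ((hhint.const_mul ε).sub (hφ₀.sub hφint)).sub (integrable_const ε)
  have hFnonneg : ∀ x, 0 ≤ F x := by
    intro x
    have h := Real.add_one_le_exp ((φ₀ x - φ x) / ε)
    have h2 := mul_le_mul_of_nonneg_left h hε.le
    rw [mul_add, mul_one] at h2
    have hid : ε * ((φ₀ x - φ x) / ε) = φ₀ x - φ x := by field_simp
    simp only [hFdef]
    linarith
  have hdiff : dualObj μ ν c ε φ ψ₀ - dualObj μ ν c ε φ₀ ψ₀ = ∫ x, F x ∂μ := by
    have hI0 : Integrable (fun x => φ₀ x - φ x) μ := hφ₀.sub hφint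
    have hI1 : Integrable (fun x => ε * Real.exp ((φ₀ x - φ x) / ε) - (φ₀ x - φ x)) μ :=
      (hhint.const_mul ε).sub hI0
    simp only [dualObj, hGone, hE₀eq, hFdef]
    rw [integral_sub hI1 (integrable_const ε),
      integral_sub (hhint.const_mul ε) hI0,
      integral_const_mul, integral_sub hφ₀ hφint, integral_const]
    simp only [measure_univ, probReal_univ, smul_eq_mul, one_mul]
    ring
  have hge : dualObj μ ν c ε φ₀ ψ₀ ≤ dualObj μ ν c ε φ ψ₀ := by
    have h0 : (0:ℝ) ≤ ∫ x, F x ∂μ := integral_nonneg hFnonneg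
    linarith
  refine ⟨hφint, hGint, hge, fun hle => ?_⟩
  have h0 : (0:ℝ) ≤ ∫ x, F x ∂μ := integral_nonneg hFnonneg
  have hzero : ∫ x, F x ∂μ = 0 := le_antisymm (by linarith) h0
  have hF0 : F =ᵐ[μ] 0 := (integral_eq_zero_iff_of_nonneg hFnonneg hFint).1 hzero
  filter_upwards [hF0] with x hx
  simp only [hFdef, Pi.zero_apply] at hx
  by_contra hne
  have hu : (φ₀ x - φ x) / ε ≠ 0 := by
    rw [div_ne_zero_iff, sub_ne_zero]
    exact ⟨fun h => hne h.symm, hε'⟩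
  have hlt := mul_lt_mul_of_pos_left (Real.add_one_lt_exp hu) hε
  rw [mul_add, mul_one] at hlt
  have hid : ε * ((φ₀ x - φ x) / ε) = φ₀ x - φ x := by field_simp
  linarith

end Aux

/-- If `(φ₀, ψ₀)` maximizes the full EOT dual functional over `L¹(μ) × L¹(ν)`, then the
smoothed potentials `φ(x) = -ε log ∫ exp((ψ₀(y)-c(x,y))/ε)dν(y)` and `ψ = φ^{c,ε}` are also
maximizers, and `φ = φ₀` μ-a.s., `ψ = ψ₀` ν-a.s. -/
theorem stmt_3 {d : ℕ} (X Y : Set (EuclideanSpace ℝ (Fin d)))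
    (hX : IsCompact X) (hY : IsCompact Y)
    (μ ν : Measure (EuclideanSpace ℝ (Fin d)))
    [IsProbabilityMeasure μ] [IsProbabilityMeasure ν]
    (hμX : μ X = 1) (hνY : ν Y = 1)
    (c : EuclideanSpace ℝ (Fin d) → EuclideanSpace ℝ (Fin d) → ℝ)
    (hcm : Measurable fun p : EuclideanSpace ℝ (Fin d) × EuclideanSpace ℝ (Fin d) => c p.1 p.2)
    (Mc : ℝ) (hcb : ∀ x y, |c x y| ≤ Mc)
    (ε : ℝ) (hε : 0 < ε)
    (φ₀ : EuclideanSpace ℝ (Fin d) → ℝ) (ψ₀ : EuclideanSpace ℝ (Fin d) → ℝ)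
    (hφ₀ : Integrable φ₀ μ) (hψ₀ : Integrable ψ₀ ν)
    (hmax : ∀ (φ' : EuclideanSpace ℝ (Fin d) → ℝ) (ψ' : EuclideanSpace ℝ (Fin d) → ℝ),
      Integrable φ' μ → Integrable ψ' ν →
        dualObj μ ν c ε φ' ψ' ≤ dualObj μ ν c ε φ₀ ψ₀)
    (φ ψ : EuclideanSpace ℝ (Fin d) → ℝ)
    (hφdef : ∀ x, φ x = -ε * Real.log (∫ y, Real.exp ((ψ₀ y - c x y) / ε) ∂ν))
    (hψdef : ∀ y, ψ y = -ε * Real.log (∫ x, Real.exp ((φ x - c x y) / ε) ∂μ)) :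
    dualObj μ ν c ε φ₀ ψ₀ ≤ dualObj μ ν c ε φ ψ
    ∧ φ =ᵐ[μ] φ₀ ∧ ψ =ᵐ[ν] ψ₀ := by
  -- Step 1: integrability of the exponential term at (φ₀, ψ₀)
  have hE₀ : Integrable
      (fun p => Real.exp ((φ₀ p.1 + ψ₀ p.2 - c p.1 p.2) / ε)) (μ.prod ν) := by
    by_contra hni
    have hni' : ¬ Integrable
        (fun p => Real.exp ((φ₀ p.1 + 1 + ψ₀ p.2 - c p.1 p.2) / ε)) (μ.prod ν) := by
      intro h
      apply hni
      have h2 := h.const_mul (Real.exp (-(1 / ε)))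
      refine h2.congr (Filter.Eventually.of_forall fun p => ?_)
      dsimp only
      rw [← Real.exp_add]
      congr 1
      field_simp
      ring
    have h1 := hmax (fun x => φ₀ x + 1) ψ₀ (hφ₀.add (integrable_const 1)) hψ₀
    simp only [dualObj] at h1
    rw [integral_undef hni, integral_undef hni',
      integral_add hφ₀ (integrable_const 1), integral_const] at h1
    simp only [measure_univ, probReal_univ, smul_eq_mul, one_mul, mul_zero] at h1
    linarith
  -- Step 2: first half-step in x
  obtain ⟨hφint, hGint, h1, h1eq⟩ :=
    half_step μ ν c hcm Mc hcb ε hε φ₀ ψ₀ hφ₀ hψ₀ hE₀ φ hφdef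
  have hmaxφ := hmax φ ψ₀ hφint hψ₀
  have heq1 : dualObj μ ν c ε φ ψ₀ = dualObj μ ν c ε φ₀ ψ₀ := le_antisymm hmaxφ h1
  have hφae : φ =ᵐ[μ] φ₀ := h1eq hmaxφ
  -- Step 3: second half-step in y (with swapped roles)
  have hE₀' : Integrable
      (fun p : _ × _ => Real.exp ((ψ₀ p.1 + φ p.2 - c p.2 p.1) / ε)) (ν.prod μ) := by
    refine hGint.swap.congr (Filter.Eventually.of_forall fun p => ?_)
    simp only [Function.comp_apply, Prod.fst_swap, Prod.snd_swap]
    congr 1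
    ring
  obtain ⟨hψint, -, h2, h2eq⟩ :=
    half_step ν μ (fun y x => c x y) (hcm.comp measurable_swap) Mc (fun y x => hcb x y)
      ε hε ψ₀ φ hψ₀ hφint hE₀' ψ hψdef
  rw [dualObj_swap μ ν c ε φ ψ₀, dualObj_swap μ ν c ε φ ψ] at h2
  refine ⟨heq1 ▸ h2, hφae, h2eq ?_⟩
  rw [dualObj_swap μ ν c ε φ ψ, dualObj_swap μ ν c ε φ ψ₀, heq1]
  exact hmax φ ψ hφint hψint
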